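/- Under the adaptive-stencil mesh setup, assume u_{i+1} ≠ u_i. Then for every real x, the degree-n Newton interpolant satisfies U_n(x) = u_i + (u_{i+1} − u_i)·S_n(s(x)), where s(x) = (x − x_i)/(x_{i+1} − x_i) and S_n(s) = s + Σ_{j=1}^{n−1} (λ̄_j / (d_1⋯d_j)) · s·(s−1) · Π_{k=2}^{j} (s − t_k) (the product over k from 2 to j being empty, equal to 1, when j = 1). -/

import Mathlib

/-- Divided differences over consecutive nodes: `divdiff x u k m = U[x_k, …, x_{k+m}]`. -/
noncomputable def divdiff (x u : ℕ → ℝ) : ℕ → ℕ → ℝ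
  | k, 0 => u k
  | k, m + 1 => (divdiff x u (k + 1) m - divdiff x u k m) / (x (k + m + 1) - x k)

/-- `stMin e j = min{e_0, …, e_j}`. -/
def stMin (e : ℕ → ℕ) (j : ℕ) : ℕ := (Finset.range (j + 1)).inf' Finset.nonempty_range_add_one e

/-- `stMax e j = max{e_0, …, e_j}`. -/
def stMax (e : ℕ → ℕ) (j : ℕ) : ℕ := (Finset.range (j + 1)).sup' Finset.nonempty_range_add_one e

/-- `U[V_j]`: the divided difference over the consecutive nodes of the stencil
`V_j = {e_0, …, e_{j+1}}`, from its leftmost node `x_j^l` to its rightmost node `x_j^r`. -/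
noncomputable def UV (x u : ℕ → ℝ) (e : ℕ → ℕ) (j : ℕ) : ℝ :=
  divdiff x u (stMin e (j + 1)) (stMax e (j + 1) - stMin e (j + 1))

/-- The Newton interpolant of degree `n` on the adaptive stencil:
`U_n(y) = u_i + Σ_{j=0}^{n−1} U[V_j] · Π_{k=0}^{j} (y − x_{e_k})`. -/
noncomputable def Un (x u : ℕ → ℝ) (e : ℕ → ℕ) (i n : ℕ) (y : ℝ) : ℝ :=
  u i + ∑ j ∈ Finset.range n, UV x u e j * ∏ k ∈ Finset.range (j + 1), (y - x (e k))

/-- Normalized stencil width `d_j = (x_j^r − x_j^l)/(x_{i+1} − x_i)`. -/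
noncomputable def dN (x : ℕ → ℝ) (e : ℕ → ℕ) (i j : ℕ) : ℝ :=
  (x (stMax e (j + 1)) - x (stMin e (j + 1))) / (x (i + 1) - x i)

/-- Normalized position `t_j = (x_{e_j} − x_i)/(x_{i+1} − x_i)` of the added stencil point. -/
noncomputable def tN (x : ℕ → ℝ) (e : ℕ → ℕ) (i j : ℕ) : ℝ :=
  (x (e j) - x i) / (x (i + 1) - x i)

/-- Scaled divided-difference ratio
`λ̄_j = (U[V_j]/U[x_i, x_{i+1}]) · Π_{k=1}^{j} (x_k^r − x_k^l)`. -/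
noncomputable def lamBar (x u : ℕ → ℝ) (e : ℕ → ℕ) (i j : ℕ) : ℝ :=
  (UV x u e j / divdiff x u i 1) *
    ∏ k ∈ Finset.Icc 1 j, (x (stMax e (k + 1)) - x (stMin e (k + 1)))

/-- The expanded normalized Newton form
`S_n(s) = s + Σ_{j=1}^{n−1} (λ̄_j / (d_1⋯d_j)) · s·(s−1) · Π_{k=2}^{j} (s − t_k)`. -/
noncomputable def Sn (n : ℕ) (d t lam : ℕ → ℝ) (s : ℝ) : ℝ :=
  s + ∑ j ∈ Finset.Icc 1 (n - 1),
    (lam j / ∏ k ∈ Finset.Icc 1 j, d k) * (s * (s - 1)) * ∏ k ∈ Finset.Icc 2 j, (s - t k)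

/-- Under the adaptive-stencil mesh setup with `u_{i+1} ≠ u_i`, the Newton interpolant
factors as `U_n(x) = u_i + (u_{i+1} − u_i)·S_n(s(x))` with `s(x) = (x − x_i)/(x_{i+1} − x_i)`. -/
theorem newton_factored_form
    (N n i : ℕ) (hn : 2 ≤ n) (hiN : i + 1 ≤ N)
    (x u : ℕ → ℝ)
    (hx : ∀ k, k < N → x k < x (k + 1))
    (e : ℕ → ℕ)
    (he0 : e 0 = i) (he1 : e 1 = i + 1)
    (heN : ∀ j, j ≤ n → e j ≤ N)
    (heStep : ∀ j, 2 ≤ j → j ≤ n →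
      e j + 1 = stMin e (j - 1) ∨ e j = stMax e (j - 1) + 1)
    (hu : u (i + 1) ≠ u i) :
    ∀ y : ℝ,
      Un x u e i n y =
        u i + (u (i + 1) - u i) *
          Sn n (dN x e i) (tN x e i) (lamBar x u e i) ((y - x i) / (x (i + 1) - x i)) := by
  intro y
  have hmono : ∀ a b : ℕ, b ≤ N → a < b → x a < x b := by
    intro a b
    induction b with
    | zero => omega
    | succ m ih =>
      intro hbN hab
      rcases Nat.lt_succ_iff_lt_or_eq.mp hab with h | h
      · exact lt_trans (ih (by omega) h) (hx m (by omega))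
      · subst h; exact hx a (by omega)
  have hh : (0:ℝ) < x (i + 1) - x i := sub_pos.mpr (hmono i (i + 1) hiN (by omega))
  have hh0 : x (i + 1) - x i ≠ 0 := ne_of_gt hh
  have hΔ : u (i + 1) - u i ≠ 0 := sub_ne_zero.mpr hu
  have hD : divdiff x u i 1 = (u (i + 1) - u i) / (x (i + 1) - x i) := by
    simp [divdiff]
  have hminle : ∀ k : ℕ, stMin e (k + 1) ≤ i := by
    intro k
    exact he0 ▸ Finset.inf'_le e (Finset.mem_range.mpr (by omega : (0:ℕ) < k + 1 + 1))
  have hmaxge : ∀ k : ℕ, i + 1 ≤ stMax e (k + 1) := by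
    intro k
    exact he1 ▸ Finset.le_sup' e (Finset.mem_range.mpr (by omega : (1:ℕ) < k + 1 + 1))
  have hmaxN : ∀ k : ℕ, k + 1 ≤ n → stMax e (k + 1) ≤ N := by
    intro k hk
    apply Finset.sup'_le
    intro m hm
    exact heN m (by simp only [Finset.mem_range] at hm; omega)
  have hw : ∀ k : ℕ, k + 1 ≤ n → 0 < x (stMax e (k + 1)) - x (stMin e (k + 1)) := by
    intro k hk
    have h1 := hminle k
    have h2 := hmaxge k
    exact sub_pos.mpr (hmono _ _ (hmaxN k hk) (by omega))
  have hmin1 : stMin e 1 = i := by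
    refine le_antisymm (he0 ▸ Finset.inf'_le e (Finset.mem_range.mpr (by omega : (0:ℕ) < 2))) ?_
    apply Finset.le_inf'
    intro m hm
    rw [Finset.mem_range] at hm
    interval_cases m <;> simp [he0, he1]
  have hmax1 : stMax e 1 = i + 1 := by
    refine le_antisymm ?_ (he1 ▸ Finset.le_sup' e (Finset.mem_range.mpr (by omega : (1:ℕ) < 2)))
    apply Finset.sup'_le
    intro m hm
    rw [Finset.mem_range] at hm
    interval_cases m <;> simp [he0, he1]
  have hUV0 : UV x u e 0 = divdiff x u i 1 := by
    rw [UV, hmin1, hmax1]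
    norm_num
  rw [Un, Sn, mul_add, Finset.mul_sum]
  have hsplit : Finset.range n = insert 0 (Finset.Icc 1 (n - 1)) := by
    ext m; simp [Finset.mem_range, Finset.mem_Icc]; omega
  rw [hsplit, Finset.sum_insert (by simp)]
  congr 1
  congr 1
  · rw [Finset.prod_range_one, hUV0, hD, he0]
    ring
  · apply Finset.sum_congr rfl
    intro j hj
    simp only [Finset.mem_Icc] at hj
    obtain ⟨m, rfl⟩ : ∃ m, j = m + 1 := ⟨j - 1, by omega⟩
    have hjn : m + 1 ≤ n - 1 := hj.2
    have hprodsplit : Finset.range (m + 1 + 1) = insert 0 (insert 1 (Finset.Icc 2 (m + 1))) := by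
      ext a; simp [Finset.mem_range, Finset.mem_Icc]; omega
    rw [hprodsplit, Finset.prod_insert (by simp), Finset.prod_insert (by simp)]
    have hst : ∀ k : ℕ, (y - x i) / (x (i + 1) - x i) - tN x e i k
        = (y - x (e k)) / (x (i + 1) - x i) := by
      intro k
      rw [tN, div_sub_div_same]
      ring_nf
    have hQ : ∏ k ∈ Finset.Icc 2 (m + 1), ((y - x i) / (x (i + 1) - x i) - tN x e i k)
        = (∏ k ∈ Finset.Icc 2 (m + 1), (y - x (e k))) / (x (i + 1) - x i) ^ m := by
      rw [Finset.prod_congr rfl (fun k _ => hst k), Finset.prod_div_distrib,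
        Finset.prod_const, Nat.card_Icc, show m + 1 + 1 - 2 = m from by omega]
    have hdprod : ∏ k ∈ Finset.Icc 1 (m + 1), dN x e i k
        = (∏ k ∈ Finset.Icc 1 (m + 1), (x (stMax e (k + 1)) - x (stMin e (k + 1))))
          / (x (i + 1) - x i) ^ (m + 1) := by
      simp only [dN]
      rw [Finset.prod_div_distrib, Finset.prod_const, Nat.card_Icc,
        show m + 1 + 1 - 1 = m + 1 from by omega]
    have hW : (∏ k ∈ Finset.Icc 1 (m + 1), (x (stMax e (k + 1)) - x (stMin e (k + 1)))) ≠ 0 := by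
      apply Finset.prod_ne_zero_iff.mpr
      intro k hk
      simp only [Finset.mem_Icc] at hk
      exact ne_of_gt (hw k (by omega))
    rw [lamBar, hQ, hdprod, hD, he0, he1]
    field_simp
    ring
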